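/- Let S be a finite singleton-rich semigroup, s, t ∈ S, and m an integer such that sᵢ* tᵢ⁺ = tᵢ⁺ sᵢ* for all i < m, where s₀ = s, t₀ = t, and s_{i+1} = sᵢ tᵢ⁺, t_{i+1} = sᵢ* tᵢ whenever sᵢ* tᵢ⁺ = tᵢ⁺ sᵢ* (and s_{i+1} = sᵢ, t_{i+1} = tᵢ otherwise). Then for all i < m: (1) s_{i+1}* ≤ sᵢ* and s_{i+1}* ≤ tᵢ⁺, and t_{i+1}⁺ ≤ sᵢ* and t_{i+1}⁺ ≤ tᵢ⁺; (2) s_{i+1} = s tᵢ⁺ and t_{i+1} = sᵢ* t. -/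
import Mathlib


open scoped Classical

/-- φ*(s): the idempotent right identities of `s`. -/
def rIds {S : Type*} [Mul S] (s : S) : Set S := {e | e * e = e ∧ s * e = s}

/-- φ⁺(s): the idempotent left identities of `s`. -/
def lIds {S : Type*} [Mul S] (s : S) : Set S := {e | e * e = e ∧ e * s = s}

/-- `x` is the (necessarily unique) element of a singleton kernel (minimal ideal) of the
subsemigroup `T`: `{x}` is an ideal of `T`, hence the minimal ideal of `T`. -/
def IsKer {S : Type*} [Semigroup S] (T : Subsemigroup S) (x : S) : Prop :=
  x ∈ T ∧ ∀ a ∈ T, a * x = x ∧ x * a = x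

/-- The natural partial order on idempotents: `e ≤ f` iff `ef = fe = e`. -/
def nle {S : Type*} [Mul S] (e f : S) : Prop := e * f = e ∧ f * e = e

/-- The relation `≪`: `s ≪ t` iff `s = s⁺ t s*`, where `sa s = s*` and `pl s = s⁺`. -/
def ll {S : Type*} [Mul S] (sa pl : S → S) (s t : S) : Prop := s = pl s * t * sa s

/-- Lemma on the ε-sequences: if `sᵢ* tᵢ⁺ = tᵢ⁺ sᵢ*` for all `i < m`, then for all `i < m`:
`s_{i+1}* ≤ sᵢ*, tᵢ⁺` and `t_{i+1}⁺ ≤ sᵢ*, tᵢ⁺`, and `s_{i+1} = s tᵢ⁺`, `t_{i+1} = sᵢ* t`. -/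
theorem stmt8 {S : Type*} [Semigroup S] [Fintype S] (sa pl : S → S)
    (hsa : ∀ s : S, IsKer (Subsemigroup.closure (rIds s)) (sa s))
    (hpl : ∀ s : S, IsKer (Subsemigroup.closure (lIds s)) (pl s))
    (s t : S) (sq tq : ℕ → S) (hs0 : sq 0 = s) (ht0 : tq 0 = t)
    (hrec : ∀ i : ℕ,
      (sa (sq i) * pl (tq i) = pl (tq i) * sa (sq i) →
        sq (i + 1) = sq i * pl (tq i) ∧ tq (i + 1) = sa (sq i) * tq i) ∧
      (sa (sq i) * pl (tq i) ≠ pl (tq i) * sa (sq i) →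
        sq (i + 1) = sq i ∧ tq (i + 1) = tq i))
    (m : ℕ) (hm : ∀ i < m, sa (sq i) * pl (tq i) = pl (tq i) * sa (sq i)) :
    ∀ i < m,
      (nle (sa (sq (i + 1))) (sa (sq i)) ∧ nle (sa (sq (i + 1))) (pl (tq i)) ∧
        nle (pl (tq (i + 1))) (sa (sq i)) ∧ nle (pl (tq (i + 1))) (pl (tq i))) ∧
      sq (i + 1) = s * pl (tq i) ∧ tq (i + 1) = sa (sq i) * t := by

  -- Basic facts about sa and pl
  have idem_sa : ∀ u : S, sa u * sa u = sa u := fun u => ((hsa u).2 _ (hsa u).1).1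
  have idem_pl : ∀ u : S, pl u * pl u = pl u := fun u => ((hpl u).2 _ (hpl u).1).1
  have rid_sa : ∀ u : S, u * sa u = u := by
    intro u
    refine Subsemigroup.closure_induction (p := fun x _ => u * x = u)
      (fun e he => he.2) ?_ (hsa u).1
    intro x y _ _ hx hy; rw [← mul_assoc, hx, hy]
  have lid_pl : ∀ u : S, pl u * u = u := by
    intro u
    refine Subsemigroup.closure_induction (p := fun x _ => x * u = u)
      (fun e he => he.2) ?_ (hpl u).1
    intro x y _ _ hx hy; rw [mul_assoc, hy, hx]
  have nle_sa : ∀ u e, e ∈ rIds u → nle (sa u) e := by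
    intro u e he
    have h := (hsa u).2 e (Subsemigroup.subset_closure he)
    exact ⟨h.2, h.1⟩
  have nle_pl : ∀ u e, e ∈ lIds u → nle (pl u) e := by
    intro u e he
    have h := (hpl u).2 e (Subsemigroup.subset_closure he)
    exact ⟨h.2, h.1⟩
  -- Part 1
  have part1 : ∀ i < m,
      nle (sa (sq (i + 1))) (sa (sq i)) ∧ nle (sa (sq (i + 1))) (pl (tq i)) ∧
        nle (pl (tq (i + 1))) (sa (sq i)) ∧ nle (pl (tq (i + 1))) (pl (tq i)) := by
    intro i hi
    have hcomm := hm i hi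
    obtain ⟨hs1, ht1⟩ := (hrec i).1 hcomm
    have hf_r : sa (sq i) ∈ rIds (sq (i + 1)) :=
      ⟨idem_sa _, by rw [hs1, mul_assoc, ← hcomm, ← mul_assoc, rid_sa (sq i)]⟩
    have hg_r : pl (tq i) ∈ rIds (sq (i + 1)) :=
      ⟨idem_pl _, by rw [hs1, mul_assoc, idem_pl]⟩
    have hf_l : sa (sq i) ∈ lIds (tq (i + 1)) :=
      ⟨idem_sa _, by rw [ht1, ← mul_assoc, idem_sa]⟩
    have hg_l : pl (tq i) ∈ lIds (tq (i + 1)) :=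
      ⟨idem_pl _, by rw [ht1, ← mul_assoc, ← hcomm, mul_assoc, lid_pl (tq i)]⟩
    exact ⟨nle_sa _ _ hf_r, nle_sa _ _ hg_r, nle_pl _ _ hf_l, nle_pl _ _ hg_l⟩
  -- Part 2, by induction
  have part2 : ∀ i < m, sq (i + 1) = s * pl (tq i) ∧ tq (i + 1) = sa (sq i) * t := by
    intro i
    induction i with
    | zero =>
      intro hi
      obtain ⟨hs1, ht1⟩ := (hrec 0).1 (hm 0 hi)
      rw [hs1, ht1, hs0, ht0]
      exact ⟨rfl, rfl⟩
    | succ i ih =>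
      intro hi
      have hi' : i < m := Nat.lt_of_succ_lt hi
      obtain ⟨ihs, iht⟩ := ih hi'
      obtain ⟨hs2, ht2⟩ := (hrec (i + 1)).1 (hm (i + 1) hi)
      have hp := part1 i hi'
      constructor
      · rw [hs2, ihs, mul_assoc, hp.2.2.2.2]
      · rw [ht2, iht, ← mul_assoc, hp.1.1]
  exact fun i hi => ⟨part1 i hi, part2 i hi⟩
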